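/- Deterministic targets with parameters break completeness: there exist a BMTS state s₀ and a deterministic PMTS state t₀ with s₀ ≤ₜ t₀ but s₀ ≰ₘ t₀. A witness: BMTS ({s₀,s₁}, {(s₀,a,s₁)}, ∅, Φ(s₀)=tt, Φ(s₁)=tt) and deterministic PMTS ({t₀,t₁}, {(t₀,a,t₁)}, {p}, Φ(t₀)=((a,t₁)⇔p), Φ(t₁)=tt); both have as implementations (up to refinement) exactly those with no transitions or a single a-step, so ⟦s₀⟧ = ⟦t₀⟧, yet no single valuation of p lets t₀ admit both the empty and the nonempty transition set. -/
import Mathlib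


/-- Boolean formulae over a set of atomic propositions `X`. -/
inductive BForm (X : Type) : Type where
  | tt : BForm X
  | var : X → BForm X
  | neg : BForm X → BForm X
  | and : BForm X → BForm X → BForm X
  | or : BForm X → BForm X → BForm X

/-- Satisfaction of a Boolean formula under a valuation (set of true atoms). -/
def BForm.sat {X : Type} (ν : Set X) : BForm X → Prop
  | .tt => True
  | .var x => x ∈ ν
  | .neg φ => ¬ BForm.sat ν φ
  | .and φ ψ => BForm.sat ν φ ∧ BForm.sat ν ψ
  | .or φ ψ => BForm.sat ν φ ∨ BForm.sat ν ψ

/-- Substitute a formula for each atom. -/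
def BForm.map {X Y : Type} (f : X → BForm Y) : BForm X → BForm Y
  | .tt => .tt
  | .var x => f x
  | .neg φ => .neg (BForm.map f φ)
  | .and φ ψ => .and (BForm.map f φ) (BForm.map f ψ)
  | .or φ ψ => .or (BForm.map f φ) (BForm.map f ψ)

def BForm.xor {X : Type} (φ ψ : BForm X) : BForm X :=
  .or (.and φ (.neg ψ)) (.and (.neg φ) ψ)

def BForm.iff {X : Type} (φ ψ : BForm X) : BForm X :=
  .and (.or (.neg φ) ψ) (.or φ (.neg ψ))

/-- A parametric modal transition system over alphabet `A`, states `S`, parameters `P`. -/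
structure PMTS (A S P : Type) : Type where
  T : Set (S × A × S)
  Φ : S → BForm ((A × S) ⊕ P)

/-- A Boolean modal transition system is a PMTS with an empty parameter set. -/
abbrev BMTS (A S : Type) := PMTS A S Empty

/-- `T(s)`: the outgoing transitions of `s`. -/
def PMTS.Tsucc {A S P : Type} (M : PMTS A S P) (s : S) : Set (A × S) :=
  {p | (s, p.1, p.2) ∈ M.T}

/-- `Tran_ν(s)`: admissible sets of outgoing transitions under parameter valuation `ν`. -/
def PMTS.Tran {A S P : Type} (M : PMTS A S P) (ν : Set P) (s : S) : Set (Set (A × S)) :=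
  {E | E ⊆ M.Tsucc s ∧ BForm.sat (Sum.inl '' E ∪ Sum.inr '' ν) (M.Φ s)}

open Classical in
/-- Substitution of truth values for parameters according to a valuation `ν`. -/
noncomputable def paramSubst {X P : Type} (ν : Set P) : X ⊕ P → BForm (X ⊕ Empty)
  | Sum.inl x => .var (Sum.inl x)
  | Sum.inr p => if p ∈ ν then .tt else .neg .tt

/-- The BMTS `M^ν` induced by a parameter valuation `ν`. -/
noncomputable def PMTS.toBMTS {A S P : Type} (M : PMTS A S P) (ν : Set P) : BMTS A S where
  T := M.T
  Φ := fun s => (M.Φ s).map (paramSubst ν)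

/-- The modal-refinement condition on a relation `R`, w.r.t. valuations `μ` and `ν`. -/
def RefCond {A S1 S2 P1 P2 : Type} (M1 : PMTS A S1 P1) (M2 : PMTS A S2 P2)
    (μ : Set P1) (ν : Set P2) (R : Set (S1 × S2)) : Prop :=
  ∀ p ∈ R, ∀ Ms ∈ M1.Tran μ p.1, ∃ N ∈ M2.Tran ν p.2,
    (∀ q ∈ Ms, ∃ t' : S2, (q.1, t') ∈ N ∧ (q.2, t') ∈ R) ∧
    (∀ q ∈ N, ∃ s' : S1, (q.1, s') ∈ Ms ∧ (s', q.2) ∈ R)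

/-- `R` is a modal refinement relation between two BMTS. -/
def IsRefRel {A S1 S2 : Type} (M1 : BMTS A S1) (M2 : BMTS A S2) (R : Set (S1 × S2)) : Prop :=
  RefCond M1 M2 ∅ ∅ R

/-- Modal refinement on BMTS. -/
def BRefines {A S1 S2 : Type} (M1 : BMTS A S1) (M2 : BMTS A S2) (s : S1) (t : S2) : Prop :=
  ∃ R : Set (S1 × S2), (s, t) ∈ R ∧ IsRefRel M1 M2 R

/-- Modal refinement on PMTS (valuation-wise definition). -/
def PRefines {A S1 S2 P1 P2 : Type} (M1 : PMTS A S1 P1) (M2 : PMTS A S2 P2)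
    (s : S1) (t : S2) : Prop :=
  ∀ μ : Set P1, ∃ ν : Set P2, BRefines (M1.toBMTS μ) (M2.toBMTS ν) s t

/-- An implementation: every state's only admissible transition set is its full set of
transitions (i.e. `Φ(s)` is the conjunction of all outgoing transitions). -/
def PMTS.IsImplementation {A S : Type} (M : BMTS A S) : Prop :=
  ∀ s : S, M.Tran ∅ s = {M.Tsucc s}

/-- Thorough refinement: inclusion of sets of implementations. -/
def ThoroughRefines {A S1 S2 P1 P2 : Type} (M1 : PMTS A S1 P1) (M2 : PMTS A S2 P2)
    (s : S1) (t : S2) : Prop :=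
  ∀ (SI : Type) (I : BMTS A SI) (i : SI), I.IsImplementation →
    PRefines I M1 i s → PRefines I M2 i t

/-- A PMTS is deterministic if no state has two distinct successors under the same action. -/
def PMTS.Deterministic {A S P : Type} (M : PMTS A S P) : Prop :=
  ∀ s a t t', (s, a, t) ∈ M.T → (s, a, t') ∈ M.T → t = t'

/-- Global (semantic) consistency: every state has an implementation. -/
def PMTS.SemConsistent {A S : Type} (M : BMTS A S) : Prop :=
  ∀ s : S, ∃ (SI : Type) (I : BMTS A SI) (i : SI), I.IsImplementation ∧ BRefines I M i s

/-- Parameter substitution used in the de-parameterization, also retagging states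
with the valuation. -/
def deParamSubst {A S P : Type} [DecidableEq P] (ν : Finset P) :
    (A × S) ⊕ P → BForm ((A × Option (S × Finset P)) ⊕ Empty)
  | Sum.inl q => .var (Sum.inl (q.1, some (q.2, ν)))
  | Sum.inr p => if p ∈ ν then .tt else .neg .tt

/-- The de-parameterization `M^B` of a PMTS `M` with initial state `s0`.
The state `none` plays the rôle of `s0^B`. -/
noncomputable def PMTS.deParam {A S P : Type} [Fintype P] [DecidableEq P] (M : PMTS A S P) (s0 : S) :
    BMTS A (Option (S × Finset P)) where
  T := {x | (∃ a s ν, x = (none, a, some (s, ν)) ∧ (s0, a, s) ∈ M.T) ∨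
            (∃ s a s' ν, x = (some (s, ν), a, some (s', ν)) ∧ (s, a, s') ∈ M.T)}
  Φ := fun st => match st with
    | none => (Finset.univ : Finset (Finset P)).toList.foldr
        (fun ν acc => BForm.xor ((M.Φ s0).map (deParamSubst ν)) acc) (.neg .tt)
    | some (s, ν) => (M.Φ s).map (deParamSubst ν)

/-- The set of `a`-successors of a set of states. -/
def PMTS.succSet {A S P : Type} (M : PMTS A S P) (X : Set S) (a : A) : Set S :=
  {s' | ∃ s ∈ X, (s, a, s') ∈ M.T}

/-- The deterministic hull `𝒟(M)` of a PMTS (powerset construction). -/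
noncomputable def PMTS.detHull {A S P : Type} [Fintype S] (M : PMTS A S P) :
    PMTS A (Set S) P where
  T := {x | x.2.2 = M.succSet x.1 x.2.1}
  Φ := fun X => ((Set.toFinite X).toFinset).toList.foldr
    (fun s acc => .or ((M.Φ s).map (fun y => match y with
      | Sum.inl q => .var (Sum.inl (q.1, M.succSet X q.1))
      | Sum.inr p => .var (Sum.inr p))) acc) (.neg .tt)

open Classical in
/-- The parameter-free hull `𝒫(M)` of a PMTS. -/
noncomputable def PMTS.pfHull {A S P : Type} [Fintype P] [DecidableEq P] (M : PMTS A S P) :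
    BMTS A S where
  T := M.T
  Φ := fun s => (Finset.univ : Finset (Finset P)).toList.foldr
    (fun ν acc => .or ((M.Φ s).map (paramSubst (↑ν : Set P))) acc) (.neg .tt)

open Classical in
/-- Removing a state `s` (and all transitions involving it) from a BMTS. -/
noncomputable def PMTS.removeState {A S : Type} (M : BMTS A S) (s : S) :
    BMTS A {t : S // t ≠ s} where
  T := {x | (x.1.1, x.2.1, x.2.2.1) ∈ M.T}
  Φ := fun t => (M.Φ t.1).map (fun y => match y with
    | Sum.inl q => if h : q.2 = s then .neg .tt else .var (Sum.inl (q.1, ⟨q.2, h⟩))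
    | Sum.inr e => Empty.elim e)

/-- The PMTS witnessing the unavoidable exponential blowup of de-parameterization:
actions are the parameters, and both steps must take exactly the transitions whose
parameter is true. -/
noncomputable def blowupPMTS (P : Type) [Fintype P] [DecidableEq P] : PMTS P (Fin 3) P where
  T := {x | ∃ p : P, x = (0, p, 1) ∨ x = (1, p, 2)}
  Φ := fun s =>
    if s = 0 then
      (Finset.univ : Finset P).toList.foldr
        (fun p acc => .and (BForm.iff (.var (Sum.inl (p, (1 : Fin 3)))) (.var (Sum.inr p))) acc) .tt
    else if s = 1 then
      (Finset.univ : Finset P).toList.foldr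
        (fun p acc => .and (BForm.iff (.var (Sum.inl (p, (2 : Fin 3)))) (.var (Sum.inr p))) acc) .tt
    else .tt

/-- A classical modal transition system. -/
structure MTS (A S : Type) where
  may : Set (S × A × S)
  must : Set (S × A × S)
  must_sub : must ⊆ may

/-- Classical MTS modal refinement. -/
def MTSRefines {A S1 S2 : Type} (N1 : MTS A S1) (N2 : MTS A S2) (s0 : S1) (t0 : S2) : Prop :=
  ∃ R : Set (S1 × S2), (s0, t0) ∈ R ∧ ∀ p ∈ R,
    (∀ a s', (p.1, a, s') ∈ N1.may → ∃ t', (p.2, a, t') ∈ N2.may ∧ (s', t') ∈ R) ∧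
    (∀ a t', (p.2, a, t') ∈ N2.must → ∃ s', (p.1, a, s') ∈ N1.must ∧ (s', t') ∈ R)

/-- A BMTS corresponds to an MTS when its transitions are the may-transitions and the
admissible transition sets are exactly those between the must- and may-successors
(i.e. `Φ(s)` is the conjunction of the must-transitions of `s`). -/
def Corresponds {A S : Type} (N : MTS A S) (M : BMTS A S) : Prop :=
  M.T = N.may ∧
  ∀ s, M.Tran ∅ s = {E | {q : A × S | (s, q.1, q.2) ∈ N.must} ⊆ E ∧ E ⊆ M.Tsucc s}

/-- The `Avoid` set: the least set of pairs `(s, 𝒯)` closed under the rules of the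
thorough-refinement algorithm for BMTS. -/
inductive Avoid {A S : Type} (M : BMTS A S) : S → Set S → Prop
  | empty (s : S) : Avoid M s ∅
  | step (s : S) (𝒯 : Set S) (Ms : Set (A × S)) (later : A → S → Set (A × S) → Set S)
      (hM : Ms ∈ M.Tran ∅ s)
      (h1 : ∀ t ∈ 𝒯, ∀ Nt ∈ M.Tran ∅ t, ∃ a : A,
        (∃ ta, (a, ta) ∈ Nt ∧ ∀ sa, (a, sa) ∈ Ms →
          ∀ f, (∃ t' ∈ 𝒯, f ∈ M.Tran ∅ t') → ta ∈ later a sa f) ∨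
        (∃ sa, (a, sa) ∈ Ms ∧ ∀ ta, (a, ta) ∈ Nt → ta ∈ later a sa Nt))
      (h2 : ∀ f, (∃ t' ∈ 𝒯, f ∈ M.Tran ∅ t') →
        ∀ a sa, (a, sa) ∈ Ms → Avoid M sa (later a sa f)) :
      Avoid M s 𝒯

/-- The decreasing sequence `Rⁿ_{μ,ν}` of bounded modal refinement relations. -/
def BoundedRel {A S1 S2 P1 P2 : Type} (M1 : PMTS A S1 P1) (M2 : PMTS A S2 P2)
    (μ : Set P1) (ν : Set P2) : ℕ → Set (S1 × S2)
  | 0 => Set.univ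
  | n + 1 => {p | ∀ Ms ∈ M1.Tran μ p.1, ∃ N ∈ M2.Tran ν p.2,
      (∀ q ∈ Ms, ∃ t' : S2, (q.1, t') ∈ N ∧ (q.2, t') ∈ BoundedRel M1 M2 μ ν n) ∧
      (∀ q ∈ N, ∃ s' : S1, (q.1, s') ∈ Ms ∧ (s', q.2) ∈ BoundedRel M1 M2 μ ν n)}

/-- The de-negation DMTS `M^D` of a BMTS: its states are the admissible transition sets. -/
noncomputable def PMTS.deNeg {A S : Type} [Fintype A] [Fintype S] (M : BMTS A S) :
    BMTS A (Set (A × S)) where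
  T := {x | ∃ s' : S, (x.2.1, s') ∈ x.1 ∧ x.2.2 ∈ M.Tran ∅ s'}
  Φ := fun E => ((Set.toFinite E).toFinset).toList.foldr
    (fun q acc => .and
      (((Set.toFinite (M.Tran ∅ q.2)).toFinset).toList.foldr
        (fun M' acc2 => .or (.var (Sum.inl (q.1, M'))) acc2) (.neg .tt)) acc) .tt


section Proof16

lemma sat_map {X Y : Type} (V : Set Y) (f : X → BForm Y) (φ : BForm X) :
    BForm.sat V (φ.map f) ↔ BForm.sat {x | BForm.sat V (f x)} φ := by
  induction φ <;> simp [BForm.map, BForm.sat, *]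

lemma tran_toBMTS {A S P : Type} (M : PMTS A S P) (ν : Set P) (s : S) :
    (M.toBMTS ν).Tran ∅ s = M.Tran ν s := by
  ext E
  have hval : {x : (A × S) ⊕ P |
      BForm.sat (Sum.inl '' E ∪ Sum.inr '' (∅ : Set Empty)) (paramSubst ν x)}
      = Sum.inl '' E ∪ Sum.inr '' ν := by
    ext x
    cases x with
    | inl q =>
      simp [paramSubst, BForm.sat, Set.mem_image]
    | inr p =>
      by_cases hp : p ∈ ν <;> simp [paramSubst, hp, BForm.sat, Set.mem_image]
  simp only [PMTS.Tran, PMTS.toBMTS, PMTS.Tsucc, Set.mem_setOf_eq, sat_map, hval]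

def W1 : BMTS Unit Bool := ⟨{(false, (), true)}, fun _ => .tt⟩

def W2 : PMTS Unit Bool Unit :=
  ⟨{(false, (), true)},
   fun s => if s then .tt else BForm.iff (.var (Sum.inl ((), true))) (.var (Sum.inr ()))⟩

lemma W1_Tsucc_false : W1.Tsucc false = {((), true)} := by
  ext q; simp [W1, PMTS.Tsucc, Prod.ext_iff]

lemma W1_Tsucc_true : W1.Tsucc true = ∅ := by
  ext q; simp [W1, PMTS.Tsucc, Prod.ext_iff]

lemma W2_Tsucc_false : W2.Tsucc false = {((), true)} := by
  ext q; simp [W2, PMTS.Tsucc, Prod.ext_iff]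

lemma W2_Tsucc_true : W2.Tsucc true = ∅ := by
  ext q; simp [W2, PMTS.Tsucc, Prod.ext_iff]

lemma W1_tran {ν : Set Empty} (s : Bool) (E : Set (Unit × Bool)) :
    E ∈ W1.Tran ν s ↔ E ⊆ W1.Tsucc s := by
  simp [PMTS.Tran, W1, BForm.sat, PMTS.Tsucc]

lemma W2_tran_false (ν : Set Unit) (E : Set (Unit × Bool)) :
    E ∈ W2.Tran ν false ↔ E ⊆ {((), true)} ∧ (((), true) ∈ E ↔ () ∈ ν) := by
  have hmem2 : Sum.inr () ∈ (Sum.inl '' E ∪ Sum.inr '' ν : Set ((Unit × Bool) ⊕ Unit))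
      ↔ () ∈ ν := by
    constructor
    · rintro (⟨q, _, h⟩ | ⟨⟨⟩, hu, _⟩)
      · cases h
      · exact hu
    · intro h; exact Or.inr ⟨(), h, rfl⟩
  have hsat : BForm.sat (Sum.inl '' E ∪ Sum.inr '' ν) (W2.Φ false)
      ↔ (((), true) ∈ E ↔ () ∈ ν) := by
    have hmem1 : Sum.inl ((), true) ∈ (Sum.inl '' E ∪ Sum.inr '' ν :
        Set ((Unit × Bool) ⊕ Unit)) ↔ ((), true) ∈ E := by simp
    simp only [W2, BForm.iff, BForm.sat, Bool.false_eq_true, if_false, hmem1, hmem2]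
    tauto
  rw [show (E ∈ W2.Tran ν false) ↔ (E ⊆ W2.Tsucc false ∧
      BForm.sat (Sum.inl '' E ∪ Sum.inr '' ν) (W2.Φ false)) from Iff.rfl]
  rw [W2_Tsucc_false, hsat]

lemma W2_tran_true (ν : Set Unit) (E : Set (Unit × Bool)) :
    E ∈ W2.Tran ν true ↔ E ⊆ W2.Tsucc true := by
  simp [PMTS.Tran, W2, BForm.sat]

lemma set_empty_eq (μ : Set Empty) : μ = ∅ := Set.eq_empty_of_isEmpty μ

end Proof16

theorem deterministic_pmts_breaks_completeness :
    ∃ (A S1 S2 P2 : Type) (M1 : BMTS A S1) (M2 : PMTS A S2 P2)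
      (s0 : S1) (t0 : S2),
      M2.Deterministic ∧ ThoroughRefines M1 M2 s0 t0 ∧ ¬ PRefines M1 M2 s0 t0 := by
  refine ⟨Unit, Bool, Bool, Unit, W1, W2, false, false, ?_, ?_, ?_⟩
  · -- deterministic
    intro s a t t' ht ht'
    simp only [W2, Set.mem_singleton_iff, Prod.mk.injEq] at ht ht'
    rw [ht.2.2, ht'.2.2]
  · -- thorough refinement
    intro SI I i hImpl hP μ
    have hμ : μ = ∅ := set_empty_eq μ
    obtain ⟨ν', R, hiR, hRef⟩ := hP μ
    have hTI : ∀ s : SI, (I.toBMTS μ).Tran ∅ s = {I.Tsucc s} := by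
      intro s; rw [tran_toBMTS, hμ]; exact hImpl s
    by_cases hE : I.Tsucc i = ∅
    · -- i has no successors: use ν = ∅
      refine ⟨∅, {(i, false)}, rfl, ?_⟩
      intro p hp Ms hMs
      rw [Set.mem_singleton_iff] at hp; subst hp
      rw [hTI, Set.mem_singleton_iff] at hMs; subst hMs
      refine ⟨∅, ?_, ?_, ?_⟩
      · rw [tran_toBMTS, W2_tran_false]; simp
      · intro q hq
        rw [show (i, false).1 = i from rfl, hE] at hq
        exact absurd hq (Set.notMem_empty q)
      · intro q hq; exact absurd hq (Set.notMem_empty q)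
    · -- i has a successor: use ν = univ
      obtain ⟨⟨⟨⟩, w0⟩, hw0⟩ := Set.nonempty_iff_ne_empty.mpr hE
      obtain ⟨N, hN, fwd, bwd⟩ := hRef (i, false) hiR (I.Tsucc i)
        (by rw [hTI]; exact rfl)
      rw [tran_toBMTS, W1_tran, W1_Tsucc_false] at hN
      have claim1 : ∀ w : SI, ((), w) ∈ I.Tsucc i → (w, true) ∈ R := by
        intro w hw
        obtain ⟨t', ht'N, ht'R⟩ := fwd ((), w) hw
        have ht : t' = true := by
          have := hN ht'N; simpa using this
        rw [ht] at ht'R; exact ht'R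
      have claim2 : ∀ w : SI, (w, true) ∈ R → I.Tsucc w = ∅ := by
        intro w hwR
        obtain ⟨N', hN', fwd', _⟩ := hRef (w, true) hwR (I.Tsucc w)
          (by rw [hTI]; exact rfl)
        rw [tran_toBMTS, W1_tran, W1_Tsucc_true, Set.subset_empty_iff] at hN'
        apply Set.eq_empty_iff_forall_notMem.mpr
        intro q hq
        obtain ⟨t', htN, _⟩ := fwd' q hq
        rw [hN'] at htN
        exact absurd htN (Set.notMem_empty _)
      refine ⟨Set.univ,
        {p | p = (i, false) ∨ (p.2 = true ∧ ((), p.1) ∈ I.Tsucc i)}, Or.inl rfl, ?_⟩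
      intro p hp Ms hMs
      rw [hTI, Set.mem_singleton_iff] at hMs; subst hMs
      rcases hp with hp | ⟨hp2, hp1⟩
      · subst hp
        refine ⟨{((), true)}, ?_, ?_, ?_⟩
        · rw [tran_toBMTS, W2_tran_false]
          exact ⟨subset_rfl, by simp⟩
        · rintro ⟨⟨⟩, w⟩ hq
          exact ⟨true, rfl, Or.inr ⟨rfl, hq⟩⟩
        · intro q hq
          rw [Set.mem_singleton_iff] at hq; subst hq
          exact ⟨w0, hw0, Or.inr ⟨rfl, hw0⟩⟩
      · have hEmpty : I.Tsucc p.1 = ∅ := claim2 p.1 (claim1 p.1 hp1)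
        refine ⟨∅, ?_, ?_, ?_⟩
        · rw [tran_toBMTS, hp2, W2_tran_true]
          exact Set.empty_subset _
        · intro q hq
          rw [hEmpty] at hq
          exact absurd hq (Set.notMem_empty q)
        · intro q hq; exact absurd hq (Set.notMem_empty q)
  · -- not modal refinement
    intro h
    obtain ⟨ν, R, hR0, hRef⟩ := h ∅
    by_cases hν : () ∈ ν
    · obtain ⟨N, hN, _, bwd⟩ := hRef (false, false) hR0 ∅
        (by rw [tran_toBMTS, W1_tran]; exact Set.empty_subset _)
      rw [tran_toBMTS, W2_tran_false] at hN
      obtain ⟨s', hs', _⟩ := bwd _ (hN.2.mpr hν)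
      exact absurd hs' (Set.notMem_empty _)
    · obtain ⟨N, hN, fwd, _⟩ := hRef (false, false) hR0 {((), true)}
        (by rw [tran_toBMTS, W1_tran, W1_Tsucc_false])
      rw [tran_toBMTS, W2_tran_false] at hN
      obtain ⟨t', ht'N, _⟩ := fwd ((), true) rfl
      have ht : t' = true := by
        have := hN.1 ht'N; simpa using this
      rw [ht] at ht'N
      exact hν (hN.2.mp ht'N)
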